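/- Let X_s and X_t be real random variables on a common probability space, F_t the distribution function of X_t, V uniform on [0,1] independent of (X_s, X_t), and F̃_t the distributional transform of F_t (using V). Suppose δ > 0 satisfies P(|F̃_t(X_t) − F̃_t(X_s)| > δ²) ≤ L·δ². Then for every x ∈ ℝ, P(X_s ≤ x < X_t) ≤ (L+1)·δ². -/

import Mathlib

open MeasureTheory ProbabilityTheory Function Set Filter Topology

/-- If the distributional transform `F̃_t` of the cdf of `X_t` (built with a uniform
`V` independent of `(X_s, X_t)`) satisfies `P(|F̃_t(X_t) − F̃_t(X_s)| > δ²) ≤ L·δ²`,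
then `P(X_s ≤ x < X_t) ≤ (L+1)·δ²` for every real `x`. -/
theorem stmt_3 {Ω : Type*} [MeasurableSpace Ω] (P : Measure Ω) [IsProbabilityMeasure P]
    (Xs Xt V : Ω → ℝ) (hXs : Measurable Xs) (hXt : Measurable Xt) (hV : Measurable V)
    (hVunif : Measure.map V P = volume.restrict (Set.Icc (0:ℝ) 1))
    (hindep : IndepFun (fun ω => (Xs ω, Xt ω)) V P)
    (F : ℝ → ℝ) (hF : ∀ x, F x = (P {ω | Xt ω ≤ x}).toReal)
    (Ftil : ℝ → Ω → ℝ)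
    (hFtil : ∀ x ω, Ftil x ω = leftLim F x + V ω * (F x - leftLim F x))
    (L δ : ℝ) (hL : 0 ≤ L) (hδ : 0 < δ)
    (hyp : (P {ω | |Ftil (Xt ω) ω - Ftil (Xs ω) ω| > δ ^ 2}).toReal ≤ L * δ ^ 2) :
    ∀ x : ℝ, (P {ω | Xs ω ≤ x ∧ x < Xt ω}).toReal ≤ (L + 1) * δ ^ 2 := by
  intro x
  have hδ2 : (0:ℝ) < δ ^ 2 := by positivity
  -- basic facts about F
  have hmono : Monotone F := by
    intro a b hab
    rw [hF, hF]
    exact ENNReal.toReal_mono (measure_ne_top _ _)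
      (measure_mono (fun ω hω => le_trans hω hab))
  have hF0 : ∀ y, 0 ≤ F y := fun y => by rw [hF]; exact ENNReal.toReal_nonneg
  have hGle : ∀ y, leftLim F y ≤ F y := fun y => hmono.leftLim_le le_rfl
  have hofReal : ∀ y, ENNReal.ofReal (F y) = P {ω | Xt ω ≤ y} := by
    intro y; rw [hF]; exact ENNReal.ofReal_toReal (measure_ne_top _ _)
  set t : ℝ := F x + δ ^ 2 with ht
  -- null sets for V
  have hV0 : P {ω | V ω < 0} = 0 := by
    have he : {ω | V ω < 0} = V ⁻¹' (Iio 0) := rfl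
    rw [he, ← Measure.map_apply hV measurableSet_Iio, hVunif,
      Measure.restrict_apply measurableSet_Iio]
    have : Iio (0:ℝ) ∩ Icc 0 1 = ∅ := by
      ext v; simp only [mem_inter_iff, mem_Iio, mem_Icc, mem_empty_iff_false, iff_false]
      rintro ⟨h1, h2, h3⟩; linarith
    rw [this]; simp
  have hV1 : P {ω | 1 < V ω} = 0 := by
    have he : {ω | 1 < V ω} = V ⁻¹' (Ioi 1) := rfl
    rw [he, ← Measure.map_apply hV measurableSet_Ioi, hVunif,
      Measure.restrict_apply measurableSet_Ioi]
    have : Ioi (1:ℝ) ∩ Icc 0 1 = ∅ := by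
      ext v; simp only [mem_inter_iff, mem_Ioi, mem_Icc, mem_empty_iff_false, iff_false]
      rintro ⟨h1, h2, h3⟩; linarith
    rw [this]; simp
  -- the bad event from the hypothesis
  set B : Set Ω := {ω | |Ftil (Xt ω) ω - Ftil (Xs ω) ω| > δ ^ 2} with hB
  set A : Set Ω := {ω | Xs ω ≤ x ∧ x < Xt ω} with hA
  -- key: for ω with good V and not in B and in A, Ftil (Xt ω) ω ≤ t
  have hkey : ∀ ω, ω ∈ A → ω ∉ B → 0 ≤ V ω → V ω ≤ 1 →
      leftLim F (Xt ω) ≤ t ∧ leftLim F (Xt ω) + V ω * (F (Xt ω) - leftLim F (Xt ω)) ≤ t := by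
    intro ω hωA hωB hv0 hv1
    have hd : Ftil (Xt ω) ω - Ftil (Xs ω) ω ≤ δ ^ 2 := by
      simp only [hB, mem_setOf_eq, not_lt] at hωB
      exact (abs_le.mp hωB).2
    have hs : Ftil (Xs ω) ω ≤ F x := by
      rw [hFtil]
      have h1 : leftLim F (Xs ω) ≤ F (Xs ω) := hGle _
      have h2 : F (Xs ω) ≤ F x := hmono hωA.1
      nlinarith
    have htt : Ftil (Xt ω) ω ≤ t := by
      have := hFtil (Xt ω) ω
      rw [ht]; linarith
    rw [hFtil] at htt
    constructor
    · have hj : 0 ≤ F (Xt ω) - leftLim F (Xt ω) := by linarith [hGle (Xt ω)]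
      nlinarith
    · exact htt
  by_cases h1 : 1 ≤ t
  · -- trivial case : P(x < Xt) ≤ δ²
    have hsub : A ⊆ {ω | x < Xt ω} := fun ω hω => hω.2
    have hcompl : {ω | x < Xt ω} = {ω | Xt ω ≤ x}ᶜ := by
      ext ω; simp [not_le]
    have hmx : MeasurableSet {ω | Xt ω ≤ x} := hXt measurableSet_Iic
    have hPc : P {ω | x < Xt ω} = 1 - P {ω | Xt ω ≤ x} := by
      rw [hcompl, prob_compl_eq_one_sub hmx]
    have : (P A).toReal ≤ 1 - F x := by
      rw [hF]
      have h1' : (P {ω | x < Xt ω}).toReal = 1 - (P {ω | Xt ω ≤ x}).toReal := by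
        rw [hPc, ENNReal.toReal_sub_of_le prob_le_one ENNReal.one_ne_top, ENNReal.toReal_one]
      calc (P A).toReal ≤ (P {ω | x < Xt ω}).toReal :=
            ENNReal.toReal_mono (measure_ne_top _ _) (measure_mono hsub)
        _ = 1 - (P {ω | Xt ω ≤ x}).toReal := h1'
    nlinarith
  · push_neg at h1
    -- nontrivial case
    set T : Set ℝ := {y | t < F y} with hT
    have hxt : F x < t := by rw [ht]; linarith
    have hTlb : ∀ y ∈ T, x ≤ y := by
      intro y hy
      by_contra h
      push_neg at h
      have := hmono h.le
      exact absurd hy (by simp only [hT, mem_setOf_eq, not_lt]; linarith)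
    have hTne : T.Nonempty := by
      -- F tends to 1
      have hUnion : ⋃ n : ℕ, {ω | Xt ω ≤ (n:ℝ)} = univ := by
        ext ω; simp only [mem_iUnion, mem_setOf_eq, mem_univ, iff_true]
        obtain ⟨n, hn⟩ := exists_nat_ge (Xt ω)
        exact ⟨n, hn⟩
      have hmonoS : Monotone (fun n : ℕ => {ω | Xt ω ≤ (n:ℝ)}) := by
        intro a b hab ω hω
        simp only [mem_setOf_eq] at hω ⊢
        exact le_trans hω (Nat.cast_le.mpr hab)
      have htend := tendsto_measure_iUnion_atTop (μ := P) hmonoS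
      rw [hUnion] at htend
      have h1lt : ENNReal.ofReal t < P univ := by
        rw [measure_univ]
        exact ENNReal.ofReal_lt_one.mpr h1
      have := htend.eventually (eventually_gt_nhds h1lt)
      obtain ⟨n, hn⟩ := this.exists
      refine ⟨(n:ℝ), ?_⟩
      have : ENNReal.ofReal t < ENNReal.ofReal (F n) := by
        rw [hofReal]; exact hn
      simp only [hT, mem_setOf_eq]
      have h0t : (0:ℝ) ≤ t := by rw [ht]; have := hF0 x; linarith
      exact (ENNReal.ofReal_lt_ofReal_iff_of_nonneg h0t).mp this
    have hbdd : BddBelow T := ⟨x, hTlb⟩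
    set q : ℝ := sInf T with hq
    have hxq : x ≤ q := le_csInf hTne hTlb
    have hFyt : ∀ y, y < q → F y ≤ t := by
      intro y hy
      by_contra h
      push_neg at h
      exact absurd (csInf_le hbdd h) (not_le.mpr hy)
    have hGqt : leftLim F q ≤ t := by
      refine le_of_tendsto (hmono.tendsto_leftLim q) ?_
      filter_upwards [self_mem_nhdsWithin] with y hy
      exact hFyt y hy
    have hGgt : ∀ y, q < y → t < leftLim F y := by
      intro y hy
      obtain ⟨z, hzT, hzy⟩ := (csInf_lt_iff hbdd hTne).mp hy
      exact lt_of_lt_of_le hzT (hmono.le_leftLim hzy)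
    by_cases hxq' : q ≤ x
    · -- q ≤ x: then A minus bad sets is empty
      have hsub : A ⊆ B ∪ ({ω | V ω < 0} ∪ {ω | 1 < V ω}) := by
        intro ω hω
        by_cases hωB : ω ∈ B
        · exact Or.inl hωB
        by_cases hv0 : 0 ≤ V ω
        · by_cases hv1 : V ω ≤ 1
          · exfalso
            have := (hkey ω hω hωB hv0 hv1).1
            have hq' : q < Xt ω := lt_of_le_of_lt hxq' hω.2
            exact absurd this (not_le.mpr (hGgt _ hq'))
          · exact Or.inr (Or.inr (not_le.mp hv1))
        · exact Or.inr (Or.inl (not_le.mp hv0))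
      have hPA : P A ≤ P B := by
        calc P A ≤ P (B ∪ ({ω | V ω < 0} ∪ {ω | 1 < V ω})) := measure_mono hsub
          _ ≤ P B + P ({ω | V ω < 0} ∪ {ω | 1 < V ω}) := measure_union_le _ _
          _ ≤ P B + (P {ω | V ω < 0} + P {ω | 1 < V ω}) :=
              add_le_add_right (measure_union_le _ _) _
          _ = P B := by rw [hV0, hV1]; simp
      have := ENNReal.toReal_mono (measure_ne_top _ _) hPA
      nlinarith
    · push_neg at hxq'
      -- x < q
      have hFxGq : F x ≤ leftLim F q := hmono.le_leftLim hxq'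
      -- continuity from below: P(Xt < q) = leftLim F q
      have hGq_eq : (P {ω | Xt ω < q}).toReal = leftLim F q := by
        have hseq : Tendsto (fun n : ℕ => q - 1 / (n + 1)) atTop (𝓝[<] q) := by
          apply tendsto_nhdsWithin_of_tendsto_nhds_of_eventually_within
          · have : Tendsto (fun n : ℕ => 1 / ((n:ℝ) + 1)) atTop (𝓝 0) :=
              tendsto_one_div_add_atTop_nhds_zero_nat
            have := Tendsto.const_sub q this
            simpa using this
          · filter_upwards with n
            have : (0:ℝ) < 1 / ((n:ℝ) + 1) := by positivity
            simp only [mem_Iio]; linarith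
        have hlim1 : Tendsto (fun n : ℕ => F (q - 1 / (n + 1))) atTop (𝓝 (leftLim F q)) :=
          (hmono.tendsto_leftLim q).comp hseq
        have hUnion : ⋃ n : ℕ, {ω | Xt ω ≤ q - 1 / (n + 1)} = {ω | Xt ω < q} := by
          ext ω
          simp only [mem_iUnion, mem_setOf_eq]
          constructor
          · rintro ⟨n, hn⟩
            have : (0:ℝ) < 1 / ((n:ℝ) + 1) := by positivity
            linarith
          · intro h
            obtain ⟨n, hn⟩ := exists_nat_one_div_lt (show (0:ℝ) < q - Xt ω by linarith)
            exact ⟨n, by linarith⟩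
        have hmonoS : Monotone (fun n : ℕ => {ω | Xt ω ≤ q - 1 / (n + 1)}) := by
          intro a b hab ω hω
          have h1 : 1 / ((b:ℝ) + 1) ≤ 1 / ((a:ℝ) + 1) := by
            apply one_div_le_one_div_of_le
            · positivity
            · have : (a:ℝ) ≤ b := by exact_mod_cast hab
              linarith
          simp only [mem_setOf_eq] at hω ⊢
          linarith
        have htend := tendsto_measure_iUnion_atTop (μ := P) hmonoS
        rw [hUnion] at htend
        have htend2 : Tendsto (fun n : ℕ => F (q - 1 / (n + 1))) atTop
            (𝓝 (P {ω | Xt ω < q}).toReal) := by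
          have := (ENNReal.tendsto_toReal (measure_ne_top P _)).comp htend
          convert this using 2 with n
          exact hF _
        exact tendsto_nhds_unique htend2 hlim1
      -- decompose {Xt < q}
      set S2 : Set Ω := {ω | x < Xt ω ∧ Xt ω < q} with hS2
      have hS2meas : MeasurableSet S2 := by
        have : S2 = Xt ⁻¹' (Ioo x q) := rfl
        rw [this]; exact hXt measurableSet_Ioo
      have hS2val : (P S2).toReal = leftLim F q - F x := by
        have hdecomp : {ω | Xt ω < q} = {ω | Xt ω ≤ x} ∪ S2 := by
          ext ω
          simp only [mem_setOf_eq, mem_union, hS2]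
          constructor
          · intro h
            rcases le_or_gt (Xt ω) x with h' | h'
            · exact Or.inl h'
            · exact Or.inr ⟨h', h⟩
          · rintro (h | ⟨h, h'⟩)
            · linarith
            · exact h'
        have hdisj : Disjoint {ω | Xt ω ≤ x} S2 := by
          rw [disjoint_left]
          rintro ω hω ⟨h1, h2⟩
          simp only [mem_setOf_eq] at hω
          linarith
        have := measure_union (μ := P) hdisj hS2meas
        rw [← hdecomp] at this
        have h2 := congrArg ENNReal.toReal this
        rw [ENNReal.toReal_add (measure_ne_top _ _) (measure_ne_top _ _), hGq_eq, ← hF] at h2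
        linarith
      -- the atom at q
      have hmq : MeasurableSet {ω | Xt ω = q} := by
        have : {ω | Xt ω = q} = Xt ⁻¹' {q} := rfl
        rw [this]; exact hXt (measurableSet_singleton q)
      have hpoint : (P {ω | Xt ω = q}).toReal = F q - leftLim F q := by
        have hdecomp : {ω | Xt ω ≤ q} = {ω | Xt ω < q} ∪ {ω | Xt ω = q} := by
          ext ω
          simp only [mem_setOf_eq, mem_union]
          constructor
          · intro h; rcases lt_or_eq_of_le h with h' | h'
            · exact Or.inl h'
            · exact Or.inr h'
          · rintro (h | h)
            · exact h.le
            · exact h.le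
        have hdisj : Disjoint {ω | Xt ω < q} {ω | Xt ω = q} := by
          rw [disjoint_left]
          rintro ω hω h2
          simp only [mem_setOf_eq] at hω h2
          exact absurd h2 (ne_of_lt hω)
        have := measure_union (μ := P) hdisj hmq
        rw [← hdecomp] at this
        have h2 := congrArg ENNReal.toReal this
        rw [ENNReal.toReal_add (measure_ne_top _ _) (measure_ne_top _ _), hGq_eq, ← hF] at h2
        linarith
      set J : ℝ := F q - leftLim F q with hJ
      have hJ0 : 0 ≤ J := by rw [hJ]; linarith [hGle q]
      set S3 : Set Ω := {ω | Xt ω = q} ∩ {ω | V ω * J ≤ t - leftLim F q} with hS3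
      have hS3val : (P S3).toReal ≤ t - leftLim F q := by
        rcases eq_or_lt_of_le hJ0 with hJz | hJpos
        · -- J = 0
          have : (P S3).toReal ≤ (P {ω | Xt ω = q}).toReal :=
            ENNReal.toReal_mono (measure_ne_top _ _) (measure_mono inter_subset_left)
          rw [hpoint] at this
          linarith [hGqt]
        · -- J > 0
          set r : ℝ := (t - leftLim F q) / J with hr
          have hr0 : 0 ≤ r := div_nonneg (by linarith) hJ0
          have hS3eq : S3 = Xt ⁻¹' {q} ∩ V ⁻¹' (Iic r) := by
            rw [hS3]
            congr 1
            ext ω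
            simp only [mem_setOf_eq, mem_preimage, mem_Iic, hr]
            rw [le_div_iff₀ hJpos]
          have hindepXtV : IndepFun Xt V P := hindep.comp measurable_snd measurable_id
          have hprod := hindepXtV.measure_inter_preimage_eq_mul {q} (Iic r)
            (measurableSet_singleton q) measurableSet_Iic
          have hPV : P (V ⁻¹' Iic r) ≤ ENNReal.ofReal r := by
            rw [← Measure.map_apply hV measurableSet_Iic, hVunif,
              Measure.restrict_apply measurableSet_Iic]
            have hsub : Iic r ∩ Icc 0 1 ⊆ Icc 0 r := by
              rintro v ⟨h1, h2, h3⟩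
              exact ⟨h2, h1⟩
            calc volume (Iic r ∩ Icc (0:ℝ) 1) ≤ volume (Icc 0 r) := measure_mono hsub
              _ = ENNReal.ofReal r := by rw [Real.volume_Icc]; norm_num
          have : (P S3).toReal ≤ J * r := by
            rw [hS3eq, hprod, ENNReal.toReal_mul]
            have h1 : (P (Xt ⁻¹' {q})).toReal = J := by
              have : Xt ⁻¹' {q} = {ω | Xt ω = q} := rfl
              rw [this, hpoint, hJ]
            rw [h1]
            apply mul_le_mul_of_nonneg_left _ hJ0
            calc (P (V ⁻¹' Iic r)).toReal ≤ (ENNReal.ofReal r).toReal :=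
                ENNReal.toReal_mono ENNReal.ofReal_ne_top hPV
              _ = r := ENNReal.toReal_ofReal hr0
          rw [hr, mul_div_cancel₀ _ (ne_of_gt hJpos)] at this
          exact this
      -- covering
      have hsub : A ⊆ B ∪ (S2 ∪ (S3 ∪ ({ω | V ω < 0} ∪ {ω | 1 < V ω}))) := by
        intro ω hω
        by_cases hωB : ω ∈ B
        · exact Or.inl hωB
        by_cases hv0 : 0 ≤ V ω
        · by_cases hv1 : V ω ≤ 1
          · obtain ⟨hG, hFt⟩ := hkey ω hω hωB hv0 hv1
            rcases lt_trichotomy (Xt ω) q with hlt | heq | hgt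
            · exact Or.inr (Or.inl ⟨hω.2, hlt⟩)
            · refine Or.inr (Or.inr (Or.inl ⟨heq, ?_⟩))
              simp only [mem_setOf_eq]
              rw [hJ]
              rw [heq] at hFt
              linarith
            · exact absurd hG (not_le.mpr (hGgt _ hgt))
          · exact Or.inr (Or.inr (Or.inr (Or.inr (not_le.mp hv1))))
        · exact Or.inr (Or.inr (Or.inr (Or.inl (not_le.mp hv0))))
      have hPA : P A ≤ P B + (P S2 + P S3) := by
        calc P A ≤ P (B ∪ (S2 ∪ (S3 ∪ ({ω | V ω < 0} ∪ {ω | 1 < V ω})))) := measure_mono hsub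
          _ ≤ P B + P (S2 ∪ (S3 ∪ ({ω | V ω < 0} ∪ {ω | 1 < V ω}))) := measure_union_le _ _
          _ ≤ P B + (P S2 + P (S3 ∪ ({ω | V ω < 0} ∪ {ω | 1 < V ω}))) :=
              add_le_add_right (measure_union_le _ _) _
          _ ≤ P B + (P S2 + (P S3 + P ({ω | V ω < 0} ∪ {ω | 1 < V ω}))) := by
              gcongr
              exact measure_union_le _ _
          _ ≤ P B + (P S2 + (P S3 + (P {ω | V ω < 0} + P {ω | 1 < V ω}))) := by
              gcongr
              exact measure_union_le _ _
          _ = P B + (P S2 + P S3) := by rw [hV0, hV1]; simp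
      have hfin : P B + (P S2 + P S3) ≠ ⊤ :=
        ENNReal.add_ne_top.mpr ⟨measure_ne_top _ _,
          ENNReal.add_ne_top.mpr ⟨measure_ne_top _ _, measure_ne_top _ _⟩⟩
      have htr := ENNReal.toReal_mono hfin hPA
      rw [ENNReal.toReal_add (measure_ne_top _ _)
        (ENNReal.add_ne_top.mpr ⟨measure_ne_top _ _, measure_ne_top _ _⟩),
        ENNReal.toReal_add (measure_ne_top _ _) (measure_ne_top _ _)] at htr
      rw [hS2val] at htr
      have : (P A).toReal ≤ L * δ ^ 2 + ((leftLim F q - F x) + (t - leftLim F q)) := by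
        linarith [hS3val]
      rw [ht] at this
      linarith
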